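/- arXiv:1506.07346 — 2 statements merged into one kernel-verified Lean document; each statement's English description precedes it below -/
import Mathlib

section
/- Let Y be a rich solid QBF-space on X, assume the frame F has property F(ν,Y), let U = {U_i}_{i∈I} be an admissible covering of X and (ψ_z)_{z∈X} a family in H. Assume the kernel K(x,y) := sup_{z∈Q_y} |⟨φ_x, ψ_z⟩| acts boundedly on Y with operator quasi-norm |||K|||. Then for every sequence (λ_i)_{i∈I} ∈ Y♮(U) and every choice of points x_i ∈ U_i, the series Σ_{i∈I} λ_i ⟨ψ_{x_i}, φ_x⟩ converges absolutely for μ-a.e. x ∈ X, and the resulting function x ↦ Σ_{i∈I} λ_i ⟨ψ_{x_i}, φ_x⟩ belongs to Y with quasi-norm at most |||K||| · ‖(λ_i)|Y♮‖. -/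
open MeasureTheory Filter Topology
open scoped ENNReal NNReal

noncomputable section

/-- Model of a rich solid quasi-Banach function space `Y` on `(X, μ)`: `Y` is described by a
solid quasi-norm functional `N` on nonnegative extended-real valued functions (a measurable
`F : X → ℂ` belongs to `Y` iff `N (fun x => ‖F x‖₊) ≠ ∞`). -/
structure QBF (X : Type*) [MeasurableSpace X] (μ : MeasureTheory.Measure X) where
  /-- the quasi-norm functional -/
  N : (X → ℝ≥0∞) → ℝ≥0∞
  /-- the quasi-norm constant `C_Y` -/
  C : ℝ≥0∞
  one_le_C : 1 ≤ C
  C_ne_top : C ≠ ⊤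
  /-- solidity -/
  mono : ∀ f g : X → ℝ≥0∞, Measurable f → Measurable g →
    (∀ᵐ x ∂μ, f x ≤ g x) → N f ≤ N g
  /-- quasi-triangle inequality with constant `C_Y` -/
  add_le : ∀ f g : X → ℝ≥0∞, Measurable f → Measurable g →
    N (fun x => f x + g x) ≤ C * (N f + N g)
  /-- homogeneity -/
  smul_eq : ∀ (c : ℝ≥0∞) (f : X → ℝ≥0∞), Measurable f → N (fun x => c * f x) = c * N f
  /-- definiteness (up to a.e. equality) -/
  eq_zero : ∀ f : X → ℝ≥0∞, Measurable f → N f = 0 → f =ᵐ[μ] 0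
  /-- completeness of `Y` -/
  complete : ∀ F : ℕ → X → ℂ, (∀ n, Measurable (F n)) →
    (∀ n, N (fun x => (‖F n x‖₊ : ℝ≥0∞)) ≠ ⊤) →
    Filter.Tendsto (fun q : ℕ × ℕ => N (fun x => (‖F q.1 x - F q.2 x‖₊ : ℝ≥0∞)))
      Filter.atTop (nhds 0) →
    ∃ G : X → ℂ, Measurable G ∧ N (fun x => (‖G x‖₊ : ℝ≥0∞)) ≠ ⊤ ∧
      Filter.Tendsto (fun n => N (fun x => (‖F n x - G x‖₊ : ℝ≥0∞)))
        Filter.atTop (nhds 0)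

/-- An admissible covering of `X`: a locally finite covering by measurable, relatively
compact sets with nonempty interior and finite intersection number `σ`. -/
structure AdmissibleCovering {X : Type*} [TopologicalSpace X] [MeasurableSpace X]
    {I : Type*} (U : I → Set X) (σ : ℕ) : Prop where
  meas : ∀ i, MeasurableSet (U i)
  rel_compact : ∀ i, IsCompact (closure (U i))
  interior_nonempty : ∀ i, (interior (U i)).Nonempty
  covers : (⋃ i, U i) = Set.univ
  locFin : LocallyFinite U
  inter_finite : ∀ i, {j | (U i ∩ U j).Nonempty}.Finite
  inter_card_le : ∀ i, {j | (U i ∩ U j).Nonempty}.ncard ≤ σ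

variable {X : Type*} [TopologicalSpace X] [MeasurableSpace X] {μ : MeasureTheory.Measure X}

/-- The `Y♭(U)` quasi-norm of a sequence `λ`: `‖Σᵢ |λᵢ| χ_{Uᵢ} | Y‖`. -/
def flatN (Q : QBF X μ) {I : Type*} (U : I → Set X) (lam : I → ℂ) : ℝ≥0∞ :=
  Q.N (fun x => ∑' i, (U i).indicator (fun _ => (‖lam i‖₊ : ℝ≥0∞)) x)

/-- The `Y♮(U)` quasi-norm of a sequence `λ`: `‖Σᵢ |λᵢ| μ(Uᵢ)⁻¹ χ_{Uᵢ} | Y‖`. -/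
def natN (Q : QBF X μ) {I : Type*} (U : I → Set X) (lam : I → ℂ) : ℝ≥0∞ :=
  Q.N (fun x => ∑' i, (U i).indicator (fun _ => (‖lam i‖₊ : ℝ≥0∞) / μ (U i)) x)

variable {H : Type*} [NormedAddCommGroup H] [InnerProductSpace ℂ H]

/-- The `H¹_ν` norm of `f ∈ H`: `∫ |⟨f, φ_x⟩| ν(x) dμ(x)` (paper's `⟨f, φ_x⟩`, linear in the
first slot, is Mathlib's `⟪φ x, f⟫_ℂ`); `f ∈ H¹_ν` iff this is finite. -/
def H1enorm (μ : MeasureTheory.Measure X) (φ : X → H) (ν : X → ℝ) (f : H) : ℝ≥0∞ :=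
  ∫⁻ x, (‖(inner ℂ (φ x) f : ℂ)‖₊ : ℝ≥0∞) * ENNReal.ofReal (ν x) ∂μ

/-- The frame kernel `R(x,y) = ⟨φ_y, φ_x⟩` (paper convention), i.e. `⟪φ x, φ y⟫_ℂ`. -/
def frameKer (φ : X → H) (x y : X) : ℂ := inner ℂ (φ x) (φ y)

/-- The `A_{m_ν}` norm of a complex kernel. -/
def AmNormC (μ : MeasureTheory.Measure X) (ν : X → ℝ) (K : X → X → ℂ) : ℝ≥0∞ :=
  max
    (essSup (fun x => ∫⁻ y, (‖K x y‖₊ : ℝ≥0∞) *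
      ENNReal.ofReal (max (ν x / ν y) (ν y / ν x)) ∂μ) μ)
    (essSup (fun y => ∫⁻ x, (‖K x y‖₊ : ℝ≥0∞) *
      ENNReal.ofReal (max (ν x / ν y) (ν y / ν x)) ∂μ) μ)

/-- The `A_{m_ν}` norm of a nonnegative kernel. -/
def AmNormE (μ : MeasureTheory.Measure X) (ν : X → ℝ) (K : X → X → ℝ≥0∞) : ℝ≥0∞ :=
  max
    (essSup (fun x => ∫⁻ y, K x y *
      ENNReal.ofReal (max (ν x / ν y) (ν y / ν x)) ∂μ) μ)
    (essSup (fun y => ∫⁻ x, K x y *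
      ENNReal.ofReal (max (ν x / ν y) (ν y / ν x)) ∂μ) μ)

/-- `ℓ : H → ℂ` is a bounded conjugate-linear functional on `H¹_ν`. -/
def IsBCF (μ : MeasureTheory.Measure X) (φ : X → H) (ν : X → ℝ) (L : H → ℂ) : Prop :=
  (∀ g h : H, H1enorm μ φ ν g ≠ ⊤ → H1enorm μ φ ν h ≠ ⊤ → L (g + h) = L g + L h) ∧
  (∀ (a : ℂ) (h : H), H1enorm μ φ ν h ≠ ⊤ → L (a • h) = (starRingEnd ℂ) a * L h) ∧
  (∃ C : ℝ≥0∞, C ≠ ⊤ ∧ ∀ h : H, H1enorm μ φ ν h ≠ ⊤ →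
    (‖L h‖₊ : ℝ≥0∞) ≤ C * H1enorm μ φ ν h)

/-- The action of the frame kernel `R` as an integral operator,
`R F (x) = ∫ R(x,y) F(y) dμ(y)`. -/
def Rop (μ : MeasureTheory.Measure X) (φ : X → H) (F : X → ℂ) (x : X) : ℂ :=
  ∫ y, frameKer φ x y * F y ∂μ

/-- A complex kernel `K` acts boundedly on `Y` with operator quasi-norm (at most) `CK`. -/
def KernelBddC (μ : MeasureTheory.Measure X) (Q : QBF X μ) (K : X → X → ℂ)
    (CK : ℝ≥0∞) : Prop :=
  ∀ F : X → ℂ, Measurable F → Q.N (fun x => (‖F x‖₊ : ℝ≥0∞)) ≠ ⊤ →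
    (∀ᵐ x ∂μ, MeasureTheory.Integrable (fun y => K x y * F y) μ) ∧
    Q.N (fun x => (‖∫ y, K x y * F y ∂μ‖₊ : ℝ≥0∞)) ≤
      CK * Q.N (fun x => (‖F x‖₊ : ℝ≥0∞))

/-- A nonnegative kernel `K` acts boundedly on `Y` with operator quasi-norm (at most) `CK`. -/
def KernelBddE (μ : MeasureTheory.Measure X) (Q : QBF X μ) (K : X → X → ℝ≥0∞)
    (CK : ℝ≥0∞) : Prop :=
  ∀ F : X → ℝ≥0∞, Measurable F → Q.N F ≠ ⊤ →
    Q.N (fun x => ∫⁻ y, K x y * F y ∂μ) ≤ CK * Q.N F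

/-- `Q_y`: the union of all covering sets `Uᵢ` containing `y`. -/
def Qset {I : Type*} (U : I → Set X) (y : X) : Set X := ⋃ i ∈ {i : I | y ∈ U i}, U i

/-- key synthesis lemma. Let the frame have property `F(ν,Y)`, let `U` be
an admissible covering and `(ψ_z)` a family in `H` whose maximal Gramian kernel
`K(x,y) = sup_{z ∈ Q_y} |⟨φ_x, ψ_z⟩|` acts boundedly on `Y` with operator quasi-norm (at
most) `CK`.  Then for every `λ ∈ Y♮(U)` and points `xᵢ ∈ Uᵢ`, the series
`Σᵢ λᵢ ⟨ψ_{xᵢ}, φ_x⟩` converges absolutely for a.e. `x` and defines a function in `Y` of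
quasi-norm `≤ CK ‖λ | Y♮‖`. -/
theorem synthesis_estimate
    [BorelSpace X] [T2Space X] [LocallyCompactSpace X] [SigmaCompactSpace X]
    [IsFiniteMeasureOnCompacts μ]
    [CompleteSpace H] [TopologicalSpace.SeparableSpace H]
    (hsupp : ∀ V : Set X, IsOpen V → V.Nonempty → 0 < μ V)
    (Q : QBF X μ)
    (hrich : ∀ K : Set X, IsCompact K → Q.N (K.indicator fun _ => 1) ≠ ⊤)
    (φ : X → H)
    -- condition (F):
    (hVmeas : ∀ f : H, Measurable fun x => (inner ℂ (φ x) f : ℂ))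
    (hParseval : ∀ f : H,
      ∫⁻ x, (‖(inner ℂ (φ x) f : ℂ)‖₊ : ℝ≥0∞) ^ 2 ∂μ = (‖f‖₊ : ℝ≥0∞) ^ 2)
    (ν : X → ℝ) (hν1 : ∀ x, 1 ≤ ν x) (hνmeas : Measurable ν)
    (CB : ℝ) (hCB : 0 < CB) (hφbd : ∀ x, ‖φ x‖ ≤ CB * ν x)
    (hRAm : AmNormC μ ν (frameKer φ) ≠ ⊤)
    (hφH1 : ∀ x, H1enorm μ φ ν (φ x) ≠ ⊤)
    -- property `F(ν,Y)`:
    (CR : ℝ≥0∞) (hCR : CR ≠ ⊤) (hRY : KernelBddC μ Q (frameKer φ) CR)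
    (C' : ℝ≥0∞) (hC' : C' ≠ ⊤)
    (hRinf : ∀ F : X → ℂ, Measurable F → Q.N (fun x => (‖F x‖₊ : ℝ≥0∞)) ≠ ⊤ →
      ∀ᵐ x ∂μ, (‖Rop μ φ F x‖₊ : ℝ≥0∞) ≤
        C' * ENNReal.ofReal (ν x) * Q.N (fun x => (‖F x‖₊ : ℝ≥0∞)))
    -- admissible covering:
    {I : Type*} (U : I → Set X) (σ : ℕ) (hU : AdmissibleCovering U σ)
    -- the synthesizing family `ψ` and its maximal Gramian kernel `K`:
    (ψ : X → H)
    (CK : ℝ≥0∞) (hCK : CK ≠ ⊤)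
    (hK : KernelBddE μ Q
      (fun x y => ⨆ z ∈ Qset U y, (‖(inner ℂ (ψ z) (φ x) : ℂ)‖₊ : ℝ≥0∞)) CK)
    -- coefficients and sampling points:
    (lam : I → ℂ) (hlam : natN Q U lam ≠ ⊤)
    (xi : I → X) (hxi : ∀ i, xi i ∈ U i) :
    (∀ᵐ x ∂μ, Summable fun i => ‖lam i‖ * ‖(inner ℂ (φ x) (ψ (xi i)) : ℂ)‖) ∧
    Q.N (fun x => (‖∑' i, lam i * (inner ℂ (φ x) (ψ (xi i)) : ℂ)‖₊ : ℝ≥0∞)) ≤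
      CK * natN Q U lam := by
  
  classical
  haveI : Countable I := by
    rw [← Set.countable_univ_iff]
    exact hU.locFin.countable_univ fun i => ((hU.interior_nonempty i).mono interior_subset)
  -- basic measure facts
  have hμ0 : ∀ i, μ (U i) ≠ 0 := fun i =>
    ((hsupp _ isOpen_interior (hU.interior_nonempty i)).trans_le
      (measure_mono interior_subset)).ne'
  have hμt : ∀ i, μ (U i) ≠ ⊤ := fun i =>
    ((measure_mono subset_closure).trans_lt (hU.rel_compact i).measure_lt_top).ne
  -- norm symmetry of the inner ℂ product
  have nsymm : ∀ v w : H, (‖(inner ℂ v w : ℂ)‖₊ : ℝ≥0∞) = (‖(inner ℂ w v : ℂ)‖₊ : ℝ≥0∞) := by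
    intro v w
    congr 1
    rw [← inner_conj_symm w v, RCLike.nnnorm_conj]
  -- the `Y♮` envelope function G
  set G : X → ℝ≥0∞ :=
    fun x => ∑' i, (U i).indicator (fun _ => (‖lam i‖₊ : ℝ≥0∞) / μ (U i)) x with hGdef
  have hGmeas : Measurable G :=
    Measurable.ennreal_tsum fun i => measurable_const.indicator (hU.meas i)
  have hGfin : Q.N G ≠ ⊤ := hlam
  -- the coefficient sum S
  set S : X → ℝ≥0∞ :=
    fun x => ∑' i, (‖lam i‖₊ : ℝ≥0∞) * (‖(inner ℂ (φ x) (ψ (xi i)) : ℂ)‖₊ : ℝ≥0∞) with hSdef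
  have hSmeas : Measurable S :=
    Measurable.ennreal_tsum fun i =>
      measurable_const.mul ((hVmeas (ψ (xi i))).nnnorm.coe_nnreal_ennreal)
  -- the kernel
  set Kf : X → X → ℝ≥0∞ :=
    fun x y => ⨆ z ∈ Qset U y, (‖(inner ℂ (ψ z) (φ x) : ℂ)‖₊ : ℝ≥0∞) with hKfdef
  -- key pointwise estimate : S x ≤ ∫ K(x,y) G(y) dμ(y)
  have key : ∀ x, S x ≤ ∫⁻ y, Kf x y * G y ∂μ := by
    intro x
    have h1 : ∀ y, (∑' i, (U i).indicator
        (fun _ => (‖(inner ℂ (φ x) (ψ (xi i)) : ℂ)‖₊ : ℝ≥0∞) *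
          ((‖lam i‖₊ : ℝ≥0∞) / μ (U i))) y) ≤ Kf x y * G y := by
      intro y
      rw [hGdef, ← ENNReal.tsum_mul_left]
      refine ENNReal.tsum_le_tsum fun i => ?_
      by_cases hy : y ∈ U i
      · rw [Set.indicator_of_mem hy, Set.indicator_of_mem hy]
        refine mul_le_mul_left ?_ _
        have hz : xi i ∈ Qset U y :=
          Set.mem_biUnion (show i ∈ {j : I | y ∈ U j} from hy) (hxi i)
        calc (‖(inner ℂ (φ x) (ψ (xi i)) : ℂ)‖₊ : ℝ≥0∞)
            = (‖(inner ℂ (ψ (xi i)) (φ x) : ℂ)‖₊ : ℝ≥0∞) := nsymm _ _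
          _ ≤ Kf x y := by
              simp only [hKfdef]
              exact le_biSup (fun z => (‖(inner ℂ (ψ z) (φ x) : ℂ)‖₊ : ℝ≥0∞)) hz
      · rw [Set.indicator_of_notMem hy, Set.indicator_of_notMem hy, mul_zero]
    calc S x
        = ∑' i, ((‖(inner ℂ (φ x) (ψ (xi i)) : ℂ)‖₊ : ℝ≥0∞) *
            ((‖lam i‖₊ : ℝ≥0∞) / μ (U i))) * μ (U i) := by
          refine tsum_congr fun i => ?_
          rw [mul_assoc, ENNReal.div_mul_cancel (hμ0 i) (hμt i), mul_comm]
      _ = ∑' i, ∫⁻ y, (U i).indicator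
            (fun _ => (‖(inner ℂ (φ x) (ψ (xi i)) : ℂ)‖₊ : ℝ≥0∞) *
              ((‖lam i‖₊ : ℝ≥0∞) / μ (U i))) y ∂μ := by
          refine tsum_congr fun i => ?_
          rw [lintegral_indicator_const (hU.meas i)]
      _ = ∫⁻ y, ∑' i, (U i).indicator
            (fun _ => (‖(inner ℂ (φ x) (ψ (xi i)) : ℂ)‖₊ : ℝ≥0∞) *
              ((‖lam i‖₊ : ℝ≥0∞) / μ (U i))) y ∂μ :=
          (lintegral_tsum fun i =>
            (measurable_const.indicator (hU.meas i)).aemeasurable).symm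
      _ ≤ ∫⁻ y, Kf x y * G y ∂μ := lintegral_mono h1
  -- measurability of the kernel, via separability of H
  have hsep : ∀ i : I, ∃ D : Set H, D.Countable ∧ D ⊆ ψ '' (U i) ∧ ψ '' (U i) ⊆ closure D := by
    intro i
    obtain ⟨t, hts, htc, hst⟩ :=
      (TopologicalSpace.IsSeparable.of_separableSpace (ψ '' (U i))).exists_countable_dense_subset
    exact ⟨t, htc, hts, hst⟩
  choose D hDc hDsub hDdense using hsep
  set M : I → X → ℝ≥0∞ := fun i x => ⨆ v ∈ D i, (‖(inner ℂ v (φ x) : ℂ)‖₊ : ℝ≥0∞) with hMdef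
  have hMmeas : ∀ i, Measurable (M i) := by
    intro i
    refine Measurable.biSup _ (hDc i) fun v _ => ?_
    have he : (fun x => (‖(inner ℂ v (φ x) : ℂ)‖₊ : ℝ≥0∞))
        = fun x => (‖(inner ℂ (φ x) v : ℂ)‖₊ : ℝ≥0∞) := funext fun x => nsymm _ _
    rw [he]
    exact (hVmeas v).nnnorm.coe_nnreal_ennreal
  have hcont : ∀ w : H, Continuous fun v : H => (‖(inner ℂ v w : ℂ)‖₊ : ℝ≥0∞) := fun w =>
    ENNReal.continuous_coe.comp ((Continuous.inner continuous_id continuous_const).nnnorm)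
  have hMeq : ∀ i x, M i x = ⨆ z ∈ U i, (‖(inner ℂ (ψ z) (φ x) : ℂ)‖₊ : ℝ≥0∞) := by
    intro i x
    have himg : (⨆ z ∈ U i, (‖(inner ℂ (ψ z) (φ x) : ℂ)‖₊ : ℝ≥0∞))
        = ⨆ v ∈ ψ '' (U i), (‖(inner ℂ v (φ x) : ℂ)‖₊ : ℝ≥0∞) :=
      (iSup_image (f := ψ) (g := fun v => (‖(inner ℂ v (φ x) : ℂ)‖₊ : ℝ≥0∞)) (t := U i)).symm
    simp only [hMdef]
    rw [himg]
    apply le_antisymm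
    · exact iSup_le_iSup_of_subset (hDsub i)
    · refine iSup₂_le fun v hv => ?_
      rcases mem_closure_iff_seq_limit.1 (hDdense i hv) with ⟨u, hu, hlim⟩
      have ht : Filter.Tendsto (fun n => (‖(inner ℂ (u n) (φ x) : ℂ)‖₊ : ℝ≥0∞))
          Filter.atTop (nhds ((‖(inner ℂ v (φ x) : ℂ)‖₊ : ℝ≥0∞))) :=
        ((hcont (φ x)).tendsto v).comp hlim
      exact le_of_tendsto ht (Filter.Eventually.of_forall fun n => le_biSup (fun v : H => (‖(inner ℂ v (φ x) : ℂ)‖₊ : ℝ≥0∞)) (hu n))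
  have hKfeq : ∀ x y, Kf x y = ⨆ i, (U i).indicator (fun _ => M i x) y := by
    intro x y
    rw [hKfdef]
    calc (⨆ z ∈ Qset U y, (‖(inner ℂ (ψ z) (φ x) : ℂ)‖₊ : ℝ≥0∞))
        = ⨆ i, ⨆ (_ : y ∈ U i), ⨆ z ∈ U i, (‖(inner ℂ (ψ z) (φ x) : ℂ)‖₊ : ℝ≥0∞) := by
          rw [Qset, iSup_iUnion]
          exact iSup_congr fun i => iSup_iUnion _ _
      _ = ⨆ i, (U i).indicator (fun _ => M i x) y := by
          refine iSup_congr fun i => ?_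
          by_cases hy : y ∈ U i
          · rw [iSup_pos hy, Set.indicator_of_mem hy, hMeq]
          · rw [iSup_neg hy, Set.indicator_of_notMem hy]
            exact bot_eq_zero
  have hKmeas : Measurable fun p : X × X => Kf p.1 p.2 := by
    have hterm : ∀ i, Measurable fun p : X × X => (U i).indicator (fun _ => M i p.1) p.2 := by
      intro i
      have he : (fun p : X × X => (U i).indicator (fun _ => M i p.1) p.2)
          = fun p : X × X => M i p.1 * (U i).indicator (fun _ => (1 : ℝ≥0∞)) p.2 := by
        funext p
        by_cases hy : p.2 ∈ U i
        · rw [Set.indicator_of_mem hy, Set.indicator_of_mem hy, mul_one]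
        · rw [Set.indicator_of_notMem hy, Set.indicator_of_notMem hy, mul_zero]
      rw [he]
      exact ((hMmeas i).comp measurable_fst).mul
        ((measurable_const.indicator (hU.meas i)).comp measurable_snd)
    have h2 : (fun p : X × X => Kf p.1 p.2)
        = fun p => ⨆ i, (U i).indicator (fun _ => M i p.1) p.2 :=
      funext fun p => hKfeq p.1 p.2
    rw [h2]
    exact Measurable.iSup hterm
  set T : X → ℝ≥0∞ := fun x => ∫⁻ y, Kf x y * G y ∂μ with hTdef
  have hTmeas : Measurable T :=
    (hKmeas.mul (hGmeas.comp measurable_snd)).lintegral_prod_right'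
  -- boundedness from hK
  have hbound : Q.N T ≤ CK * natN Q U lam := hK G hGmeas hGfin
  have hSle : Q.N S ≤ CK * natN Q U lam :=
    le_trans (Q.mono S T hSmeas hTmeas (Filter.Eventually.of_forall key)) hbound
  have hSfin : Q.N S ≠ ⊤ := by
    intro h
    exact (ENNReal.mul_ne_top hCK hlam) (top_le_iff.1 (h ▸ hSle))
  -- a.e. finiteness of S
  have hAmeas : MeasurableSet {x | S x = ⊤} := hSmeas (measurableSet_singleton ⊤)
  have hχmeas : Measurable ({x | S x = ⊤}.indicator fun _ => (1 : ℝ≥0∞)) :=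
    measurable_const.indicator hAmeas
  have hχle : ∀ᵐ x ∂μ,
      (⊤ : ℝ≥0∞) * ({x | S x = ⊤}.indicator (fun _ => (1 : ℝ≥0∞)) x) ≤ S x := by
    refine Filter.Eventually.of_forall fun x => ?_
    by_cases hx : S x = ⊤
    · rw [Set.indicator_of_mem (show x ∈ {x | S x = ⊤} from hx), mul_one, hx]
    · rw [Set.indicator_of_notMem (show x ∉ {x | S x = ⊤} from hx), mul_zero]
      exact zero_le
  have h1 : (⊤ : ℝ≥0∞) * Q.N ({x | S x = ⊤}.indicator fun _ => (1 : ℝ≥0∞)) ≤ Q.N S := by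
    rw [← Q.smul_eq ⊤ _ hχmeas]
    exact Q.mono _ S (measurable_const.mul hχmeas) hSmeas hχle
  have hχ0 : Q.N ({x | S x = ⊤}.indicator fun _ => (1 : ℝ≥0∞)) = 0 := by
    by_contra h
    exact hSfin (top_le_iff.1 (by rwa [ENNReal.top_mul h] at h1))
  have hae : ∀ᵐ x ∂μ, S x ≠ ⊤ := by
    filter_upwards [Q.eq_zero _ hχmeas hχ0] with x hx
    intro hxS
    rw [Set.indicator_of_mem (show x ∈ {x | S x = ⊤} from hxS)] at hx
    simp at hx
  -- summability translations
  have hSco : ∀ x, S x = ∑' i,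
      ((‖lam i‖₊ * ‖(inner ℂ (φ x) (ψ (xi i)) : ℂ)‖₊ : ℝ≥0) : ℝ≥0∞) := by
    intro x
    rw [hSdef]
    exact tsum_congr fun i => (ENNReal.coe_mul _ _).symm
  have hSiff : ∀ x, S x ≠ ⊤ ↔
      Summable (fun i => (‖lam i‖₊ * ‖(inner ℂ (φ x) (ψ (xi i)) : ℂ)‖₊ : ℝ≥0)) := by
    intro x
    rw [hSco x]
    exact ENNReal.tsum_coe_ne_top_iff_summable
  have hco : ∀ x (i : I), ((‖lam i‖₊ * ‖(inner ℂ (φ x) (ψ (xi i)) : ℂ)‖₊ : ℝ≥0) : ℝ)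
      = ‖lam i * (inner ℂ (φ x) (ψ (xi i)) : ℂ)‖ := by
    intro x i
    rw [norm_mul]
    push_cast
    rfl
  have hsummC : ∀ x, S x ≠ ⊤ → Summable (fun i => lam i * (inner ℂ (φ x) (ψ (xi i)) : ℂ)) := by
    intro x hx
    have hw := (hSiff x).1 hx
    have hn : Summable fun i => ‖lam i * (inner ℂ (φ x) (ψ (xi i)) : ℂ)‖ := by
      have := NNReal.summable_coe.2 hw
      exact this.congr (hco x)
    exact hn.of_norm
  have hsummC' : ∀ x, Summable (fun i => lam i * (inner ℂ (φ x) (ψ (xi i)) : ℂ)) → S x ≠ ⊤ := by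
    intro x hs
    have hn : Summable fun i => ‖lam i * (inner ℂ (φ x) (ψ (xi i)) : ℂ)‖ :=
      summable_norm_iff.2 hs
    exact (hSiff x).2 (NNReal.summable_coe.1 (hn.congr fun i => (hco x i).symm))
  -- pointwise bound for the synthesized function
  have hfinal_le : ∀ x,
      (‖∑' i, lam i * (inner ℂ (φ x) (ψ (xi i)) : ℂ)‖₊ : ℝ≥0∞) ≤ S x := by
    intro x
    by_cases hx : S x = ⊤
    · rw [hx]; exact le_top
    · have hw := (hSiff x).1 hx
      have hn' : Summable fun i => ‖lam i * (inner ℂ (φ x) (ψ (xi i)) : ℂ)‖₊ := by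
        refine hw.congr fun i => ?_
        rw [nnnorm_mul]
      calc (‖∑' i, lam i * (inner ℂ (φ x) (ψ (xi i)) : ℂ)‖₊ : ℝ≥0∞)
          ≤ ((∑' i, ‖lam i * (inner ℂ (φ x) (ψ (xi i)) : ℂ)‖₊ : ℝ≥0) : ℝ≥0∞) :=
            ENNReal.coe_le_coe.2 (nnnorm_tsum_le hn')
        _ = ∑' i, ((‖lam i * (inner ℂ (φ x) (ψ (xi i)) : ℂ)‖₊ : ℝ≥0) : ℝ≥0∞) :=
            ENNReal.coe_tsum hn'
        _ = S x := by
            rw [hSco x]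
            exact tsum_congr fun i => by rw [nnnorm_mul]
  -- measurability of the synthesized function
  obtain ⟨enc, henc⟩ := Countable.exists_injective_nat I
  have hfin : ∀ n : ℕ, {i : I | enc i < n}.Finite := fun n =>
    Set.Finite.preimage henc.injOn (Set.finite_Iio n)
  have hsFmono : Monotone fun n => (hfin n).toFinset := by
    intro m n hmn
    intro i hi
    rw [Set.Finite.mem_toFinset] at hi ⊢
    exact lt_of_lt_of_le hi hmn
  have hsFtend : Filter.Tendsto (fun n => (hfin n).toFinset) Filter.atTop Filter.atTop :=
    tendsto_atTop_finset_of_monotone hsFmono fun i =>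
      ⟨enc i + 1, by rw [Set.Finite.mem_toFinset]; exact Nat.lt_succ_self _⟩
  have hg'meas : Measurable fun x =>
      if S x = ⊤ then (0 : ℂ) else ∑' i, lam i * (inner ℂ (φ x) (ψ (xi i)) : ℂ) := by
    refine measurable_of_tendsto_metrizable
      (f := fun n x => if S x = ⊤ then (0 : ℂ)
        else ∑ i ∈ (hfin n).toFinset, lam i * (inner ℂ (φ x) (ψ (xi i)) : ℂ))
      (fun n => Measurable.ite hAmeas measurable_const
        (Finset.measurable_sum _ fun i _ => measurable_const.mul (hVmeas (ψ (xi i)))))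
      ?_
    rw [tendsto_pi_nhds]
    intro x
    by_cases hx : S x = ⊤
    · simp only [hx, if_true]
      exact tendsto_const_nhds
    · simp only [hx, if_false]
      have hs := hsummC x hx
      have hhs : Filter.Tendsto
          (fun s : Finset I => ∑ i ∈ s, lam i * (inner ℂ (φ x) (ψ (xi i)) : ℂ))
          Filter.atTop (nhds (∑' i, lam i * (inner ℂ (φ x) (ψ (xi i)) : ℂ))) := hs.hasSum
      exact hhs.comp hsFtend
  have hgmeas : Measurable fun x => ∑' i, lam i * (inner ℂ (φ x) (ψ (xi i)) : ℂ) := by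
    have he : (fun x => ∑' i, lam i * (inner ℂ (φ x) (ψ (xi i)) : ℂ))
        = fun x => if S x = ⊤ then (0 : ℂ)
            else ∑' i, lam i * (inner ℂ (φ x) (ψ (xi i)) : ℂ) := by
      funext x
      by_cases hx : S x = ⊤
      · rw [if_pos hx]
        exact tsum_eq_zero_of_not_summable fun hs => (hsummC' x hs) hx
      · rw [if_neg hx]
    rw [he]
    exact hg'meas
  constructor
  · filter_upwards [hae] with x hx
    have hw := (hSiff x).1 hx
    refine (NNReal.summable_coe.2 hw).congr fun i => ?_
    push_cast
    rfl
  · calc Q.N (fun x => (‖∑' i, lam i * (inner ℂ (φ x) (ψ (xi i)) : ℂ)‖₊ : ℝ≥0∞))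
        ≤ Q.N T := by
          refine Q.mono _ T (hgmeas.nnnorm.coe_nnreal_ennreal) hTmeas
            (Filter.Eventually.of_forall fun x => ?_)
          exact le_trans (hfinal_le x) (key x)
      _ ≤ CK * natN Q U lam := hbound
end
end

section
/- Let Y be a rich solid QBF-space on X, assume the frame F has property F(ν,Y), let U = {U_i}_{i∈I} be an admissible covering of X, and assume the kernels M(x,y) := sup_{z∈Q_y} |⟨φ_x, φ_z⟩| and M*(x,y) := M(y,x) act boundedly on Y with operator quasi-norms |||M||| and |||M*|||. Let (Φ_i)_{i∈I} be a partition of unity subordinate to U (each Φ_i measurable, 0 ≤ Φ_i ≤ 1, Φ_i vanishes outside U_i, and Σ_{i∈I} Φ_i(x) = 1 for all x ∈ X), put c_i = ∫_X Φ_i dμ, and pick points x_i ∈ U_i. Then for every F ∈ Y satisfying F(x) = ∫_X R(x,y) F(y) dμ(y) for all x ∈ X, the series U_Φ F(x) := Σ_{i∈I} c_i F(x_i) R(x, x_i) converges absolutely for μ-a.e. x ∈ X, the function U_Φ F belongs to Y, satisfies U_Φ F = R(U_Φ F) μ-a.e., and ‖U_Φ F | Y‖ ≤ σ(U) · |||M|||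 · |||M*||| · ‖F|Y‖. -/
open MeasureTheory Filter Topology
open scoped ENNReal NNReal

noncomputable section

variable {X : Type*} [TopologicalSpace X] [MeasurableSpace X] {μ : MeasureTheory.Measure X}

variable {H : Type*} [NormedAddCommGroup H] [InnerProductSpace ℂ H]

section AuxLemmas

/-- The quasi-norm of the zero function vanishes. -/
lemma QBF.N_zero (Q : QBF X μ) : Q.N (fun _ => 0) = 0 := by
  have h := Q.smul_eq 0 (fun _ => 0) measurable_const
  simpa using h

/-- If `Q.N S` is finite then `S` is a.e. finite. -/
lemma QBF.ae_ne_top (Q : QBF X μ) {S : X → ℝ≥0∞} (hS : Measurable S) (hN : Q.N S ≠ ⊤) :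
    ∀ᵐ x ∂μ, S x ≠ ⊤ := by
  have hAm : MeasurableSet {x | S x = ⊤} := hS (measurableSet_singleton ⊤)
  have hind : Measurable ({x | S x = ⊤}.indicator fun _ => (1 : ℝ≥0∞)) :=
    measurable_const.indicator hAm
  have hle : ∀ x, (⊤ : ℝ≥0∞) * {x | S x = ⊤}.indicator (fun _ => 1) x ≤ S x := by
    intro x
    by_cases hx : S x = ⊤
    · rw [Set.indicator_of_mem (by exact hx)]
      simp [hx]
    · rw [Set.indicator_of_notMem (by exact hx)]
      simp
  have h1 : Q.N (fun x => (⊤ : ℝ≥0∞) * {x | S x = ⊤}.indicator (fun _ => 1) x) ≤ Q.N S :=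
    Q.mono _ _ (measurable_const.mul hind) hS (Filter.Eventually.of_forall hle)
  rw [Q.smul_eq ⊤ _ hind] at h1
  have h0 : Q.N ({x | S x = ⊤}.indicator fun _ => (1 : ℝ≥0∞)) = 0 := by
    by_contra h
    rw [ENNReal.top_mul h] at h1
    exact hN (top_le_iff.mp h1)
  filter_upwards [Q.eq_zero _ hind h0] with x hx
  intro hx'
  rw [Set.indicator_of_mem (by exact hx') (fun _ => (1 : ℝ≥0∞))] at hx
  simp at hx

lemma ennnorm_tsum_le_general {I : Type*} (f : I → ℂ) :
    (‖∑' i, f i‖₊ : ℝ≥0∞) ≤ ∑' i, (‖f i‖₊ : ℝ≥0∞) := by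
  by_cases h : (∑' i, (‖f i‖₊ : ℝ≥0∞)) = ⊤
  · simp [h]
  · have hs : Summable fun i => ‖f i‖₊ := ENNReal.tsum_coe_ne_top_iff_summable.mp h
    have hs' : Summable fun i => ‖f i‖ := by
      simpa only [coe_nnnorm] using NNReal.summable_coe.mpr hs
    have h1 : ‖∑' i, f i‖ ≤ ∑' i, ‖f i‖ := norm_tsum_le_tsum_norm hs'
    calc (‖∑' i, f i‖₊ : ℝ≥0∞) = ENNReal.ofReal ‖∑' i, f i‖ :=
          (ofReal_norm _).symm
      _ ≤ ENNReal.ofReal (∑' i, ‖f i‖) := ENNReal.ofReal_le_ofReal h1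
      _ = ∑' i, ENNReal.ofReal ‖f i‖ :=
          ENNReal.ofReal_tsum_of_nonneg (fun i => norm_nonneg _) hs'
      _ = ∑' i, (‖f i‖₊ : ℝ≥0∞) := tsum_congr fun i => ofReal_norm _

lemma measurable_tsum_complex {α : Type*} [MeasurableSpace α] {I : Type*} [Countable I]
    {f : I → α → ℂ} (hf : ∀ i, Measurable (f i)) :
    Measurable fun x => ∑' i, f i x := by
  classical
  cases isEmpty_or_nonempty I with
  | inl h =>
    simp only [tsum_empty]
    exact measurable_const
  | inr h =>
    obtain ⟨e, he⟩ := exists_surjective_nat I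
    have hmono : Monotone fun n => (Finset.range n).image e :=
      fun m n hmn => Finset.image_subset_image (Finset.range_subset_range.mpr hmn)
    have hexh : ∀ i : I, ∃ n, i ∈ (Finset.range n).image e := by
      intro i
      obtain ⟨n, rfl⟩ := he i
      exact ⟨n + 1, Finset.mem_image.mpr ⟨n, Finset.mem_range.mpr (Nat.lt_succ_self n), rfl⟩⟩
    have htend : Tendsto (fun n => (Finset.range n).image e) atTop atTop :=
      tendsto_atTop_finset_of_monotone hmono hexh
    have hSmeas : Measurable fun x => ∑' i, (‖f i x‖₊ : ℝ≥0∞) :=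
      Measurable.ennreal_tsum fun i => (hf i).nnnorm.coe_nnreal_ennreal
    have hEmeas : MeasurableSet {x | (∑' i, (‖f i x‖₊ : ℝ≥0∞)) ≠ ⊤} :=
      (hSmeas (measurableSet_singleton ⊤)).compl
    have hiff : ∀ x, (∑' i, (‖f i x‖₊ : ℝ≥0∞)) ≠ ⊤ ↔ Summable fun i => f i x := by
      intro x
      rw [ENNReal.tsum_coe_ne_top_iff_summable]
      constructor
      · intro hs
        exact summable_norm_iff.mp (by simpa only [coe_nnnorm] using NNReal.summable_coe.mpr hs)
      · intro hs
        exact NNReal.summable_coe.mp (by simpa only [coe_nnnorm] using summable_norm_iff.mpr hs)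
    have hu : ∀ n, Measurable fun x =>
        if (∑' i, (‖f i x‖₊ : ℝ≥0∞)) ≠ ⊤ then ∑ i ∈ (Finset.range n).image e, f i x else 0 :=
      fun n => Measurable.ite hEmeas (Finset.measurable_sum _ fun i _ => hf i) measurable_const
    apply measurable_of_tendsto_metrizable hu
    rw [tendsto_pi_nhds]
    intro x
    by_cases hx : (∑' i, (‖f i x‖₊ : ℝ≥0∞)) ≠ ⊤
    · simp only [if_pos hx]
      have hsum : Summable fun i => f i x := (hiff x).mp hx
      exact hsum.hasSum.comp htend
    · simp only [if_neg hx]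
      rw [tsum_eq_zero_of_not_summable (fun hs => hx ((hiff x).mpr hs))]
      exact tendsto_const_nhds

lemma exists_countable_biSup_eq [TopologicalSpace.SeparableSpace H] (φ : X → H) (s : Set X) :
    ∃ Z : Set X, Z ⊆ s ∧ Z.Countable ∧
      ∀ g : H, (⨆ z ∈ s, (‖(inner ℂ (φ z) g : ℂ)‖₊ : ℝ≥0∞)) =
        ⨆ z ∈ Z, (‖(inner ℂ (φ z) g : ℂ)‖₊ : ℝ≥0∞) := by
  classical
  haveI : SecondCountableTopology H := UniformSpace.secondCountable_of_separable H
  obtain ⟨D, hDc, hDd⟩ := TopologicalSpace.exists_countable_dense (φ '' s)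
  have hsub : (Subtype.val '' D : Set H) ⊆ φ '' s := Subtype.coe_image_subset _ D
  have hcl : φ '' s ⊆ closure (Subtype.val '' D) := by
    intro h hh
    have h1 : (⟨h, hh⟩ : φ '' s) ∈ closure D := hDd _
    exact image_closure_subset_closure_image continuous_subtype_val ⟨⟨h, hh⟩, h1, rfl⟩
  have hchoice : ∀ d : (φ '' s), ∃ z, z ∈ s ∧ φ z = (d : H) := fun d => by
    obtain ⟨z, hz, hzw⟩ := d.2
    exact ⟨z, hz, hzw⟩
  choose zf hzf hzfw using hchoice
  have hZsub : zf '' D ⊆ s := by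
    rintro z ⟨d, hd, rfl⟩
    exact hzf d
  have hvsub : (Subtype.val '' D : Set H) ⊆ φ '' (zf '' D) := by
    rintro w ⟨d, hd, rfl⟩
    exact ⟨zf d, Set.mem_image_of_mem _ hd, hzfw d⟩
  refine ⟨zf '' D, hZsub, hDc.image _, fun g => le_antisymm ?_ ?_⟩
  · refine iSup₂_le fun z hz => ?_
    have hq : Continuous fun h : H => (‖(inner ℂ h g : ℂ)‖₊ : ℝ≥0∞) :=
      ENNReal.continuous_coe.comp ((continuous_id.inner continuous_const).nnnorm)
    have hC : IsClosed {h : H |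
        (‖(inner ℂ h g : ℂ)‖₊ : ℝ≥0∞) ≤ ⨆ z' ∈ zf '' D,
          (‖(inner ℂ (φ z') g : ℂ)‖₊ : ℝ≥0∞)} :=
      isClosed_le hq continuous_const
    have hsubC : (Subtype.val '' D : Set H) ⊆ {h : H |
        (‖(inner ℂ h g : ℂ)‖₊ : ℝ≥0∞) ≤ ⨆ z' ∈ zf '' D,
          (‖(inner ℂ (φ z') g : ℂ)‖₊ : ℝ≥0∞)} := by
      rintro w ⟨d, hd, rfl⟩
      have h1 : (‖(inner ℂ (φ (zf d)) g : ℂ)‖₊ : ℝ≥0∞) ≤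
          ⨆ z' ∈ zf '' D, (‖(inner ℂ (φ z') g : ℂ)‖₊ : ℝ≥0∞) :=
        le_biSup (fun z' : X => (‖(inner ℂ (φ z') g : ℂ)‖₊ : ℝ≥0∞)) (Set.mem_image_of_mem zf hd)
      simpa only [Set.mem_setOf_eq, hzfw d] using h1
    exact closure_minimal hsubC hC (hcl (Set.mem_image_of_mem _ hz))
  · exact iSup₂_le fun z hz =>
      le_biSup (fun z' : X => (‖(inner ℂ (φ z') g : ℂ)‖₊ : ℝ≥0∞)) (hZsub hz)

lemma qsup_measurable [OpensMeasurableSpace X] [TopologicalSpace.SeparableSpace H]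
    {I : Type*} [Countable I] (U : I → Set X) (hUm : ∀ i, MeasurableSet (U i))
    (φ : X → H) (hVmeas : ∀ f : H, Measurable fun x => (inner ℂ (φ x) f : ℂ)) :
    Measurable fun p : X × X => ⨆ z ∈ Qset U p.1, (‖frameKer φ z p.2‖₊ : ℝ≥0∞) := by
  classical
  have hZ : ∀ i : I, ∃ Z : Set X, Z ⊆ U i ∧ Z.Countable ∧
      ∀ g : H, (⨆ z ∈ U i, (‖(inner ℂ (φ z) g : ℂ)‖₊ : ℝ≥0∞)) =
        ⨆ z ∈ Z, (‖(inner ℂ (φ z) g : ℂ)‖₊ : ℝ≥0∞) :=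
    fun i => exists_countable_biSup_eq φ (U i)
  choose Z hZsub hZc hZeq using hZ
  have hfm : ∀ z : X, Measurable fun b => frameKer φ z b := by
    intro z
    have : (fun b => frameKer φ z b) = fun b => (starRingEnd ℂ) (inner ℂ (φ b) (φ z) : ℂ) := by
      funext b
      rw [frameKer, ← inner_conj_symm]
    rw [this]
    exact RCLike.continuous_conj.measurable.comp (hVmeas (φ z))
  have hA : ∀ i : I, Measurable fun b => ⨆ z ∈ U i, (‖frameKer φ z b‖₊ : ℝ≥0∞) := by
    intro i
    have he : (fun b => ⨆ z ∈ U i, (‖frameKer φ z b‖₊ : ℝ≥0∞)) =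
        fun b => ⨆ z ∈ Z i, (‖frameKer φ z b‖₊ : ℝ≥0∞) := by
      funext b
      exact hZeq i (φ b)
    rw [he]
    exact Measurable.biSup _ (hZc i) fun z _ => (hfm z).nnnorm.coe_nnreal_ennreal
  have key : ∀ p : X × X, (⨆ z ∈ Qset U p.1, (‖frameKer φ z p.2‖₊ : ℝ≥0∞)) =
      ⨆ i : I, if p.1 ∈ U i then ⨆ z ∈ U i, (‖frameKer φ z p.2‖₊ : ℝ≥0∞) else 0 := by
    intro p
    rw [Qset]
    rw [show (⋃ i ∈ {i : I | p.1 ∈ U i}, U i) = ⋃ i : I, ⋃ (_ : p.1 ∈ U i), U i from rfl]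
    rw [iSup_iUnion]
    congr 1
    funext i
    rw [iSup_iUnion fun _ : p.1 ∈ U i => U i]
    by_cases h : p.1 ∈ U i
    · rw [if_pos h, iSup_pos h]
    · rw [if_neg h, iSup_neg h]
      rfl
  rw [show (fun p : X × X => ⨆ z ∈ Qset U p.1, (‖frameKer φ z p.2‖₊ : ℝ≥0∞)) =
      fun p : X × X => ⨆ i : I, if p.1 ∈ U i then
        ⨆ z ∈ U i, (‖frameKer φ z p.2‖₊ : ℝ≥0∞) else 0 from funext key]
  refine Measurable.iSup fun i => Measurable.ite ((hUm i).preimage measurable_fst)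
    ((hA i).comp measurable_snd) measurable_const

lemma qsup_measurable_swap [OpensMeasurableSpace X] [TopologicalSpace.SeparableSpace H]
    {I : Type*} [Countable I] (U : I → Set X) (hUm : ∀ i, MeasurableSet (U i))
    (φ : X → H) (hVmeas : ∀ f : H, Measurable fun x => (inner ℂ (φ x) f : ℂ)) :
    Measurable fun p : X × X => ⨆ z ∈ Qset U p.2, (‖frameKer φ z p.1‖₊ : ℝ≥0∞) := by
  classical
  have hZ : ∀ i : I, ∃ Z : Set X, Z ⊆ U i ∧ Z.Countable ∧
      ∀ g : H, (⨆ z ∈ U i, (‖(inner ℂ (φ z) g : ℂ)‖₊ : ℝ≥0∞)) =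
        ⨆ z ∈ Z, (‖(inner ℂ (φ z) g : ℂ)‖₊ : ℝ≥0∞) :=
    fun i => exists_countable_biSup_eq φ (U i)
  choose Z hZsub hZc hZeq using hZ
  have hfm : ∀ z : X, Measurable fun b => frameKer φ z b := by
    intro z
    have he : (fun b => frameKer φ z b) = fun b => (starRingEnd ℂ) (inner ℂ (φ b) (φ z) : ℂ) := by
      funext b
      rw [frameKer, ← inner_conj_symm]
    rw [he]
    exact RCLike.continuous_conj.measurable.comp (hVmeas (φ z))
  have hA : ∀ i : I, Measurable fun b => ⨆ z ∈ U i, (‖frameKer φ z b‖₊ : ℝ≥0∞) := by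
    intro i
    have he : (fun b => ⨆ z ∈ U i, (‖frameKer φ z b‖₊ : ℝ≥0∞)) =
        fun b => ⨆ z ∈ Z i, (‖frameKer φ z b‖₊ : ℝ≥0∞) := by
      funext b
      exact hZeq i (φ b)
    rw [he]
    exact Measurable.biSup _ (hZc i) fun z _ => (hfm z).nnnorm.coe_nnreal_ennreal
  have key : ∀ p : X × X, (⨆ z ∈ Qset U p.2, (‖frameKer φ z p.1‖₊ : ℝ≥0∞)) =
      ⨆ i : I, if p.2 ∈ U i then ⨆ z ∈ U i, (‖frameKer φ z p.1‖₊ : ℝ≥0∞) else 0 := by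
    intro p
    rw [Qset]
    rw [show (⋃ i ∈ {i : I | p.2 ∈ U i}, U i) = ⋃ i : I, ⋃ (_ : p.2 ∈ U i), U i from rfl]
    rw [iSup_iUnion]
    congr 1
    funext i
    rw [iSup_iUnion fun _ : p.2 ∈ U i => U i]
    by_cases h : p.2 ∈ U i
    · rw [if_pos h, iSup_pos h]
    · rw [if_neg h, iSup_neg h]
      rfl
  rw [show (fun p : X × X => ⨆ z ∈ Qset U p.2, (‖frameKer φ z p.1‖₊ : ℝ≥0∞)) =
      fun p : X × X => ⨆ i : I, if p.2 ∈ U i then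
        ⨆ z ∈ U i, (‖frameKer φ z p.1‖₊ : ℝ≥0∞) else 0 from funext key]
  refine Measurable.iSup fun i => Measurable.ite ((hUm i).preimage measurable_snd)
    ((hA i).comp measurable_fst) measurable_const

lemma qsup_measurable_fix {I : Type*} [Countable I] (U : I → Set X)
    (hUm : ∀ i, MeasurableSet (U i)) (φ : X → H) (x : X) :
    Measurable fun y : X => ⨆ z ∈ Qset U y, (‖frameKer φ z x‖₊ : ℝ≥0∞) := by
  classical
  have key : ∀ y : X, (⨆ z ∈ Qset U y, (‖frameKer φ z x‖₊ : ℝ≥0∞)) =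
      ⨆ i : I, if y ∈ U i then ⨆ z ∈ U i, (‖frameKer φ z x‖₊ : ℝ≥0∞) else 0 := by
    intro y
    rw [Qset]
    rw [show (⋃ i ∈ {i : I | y ∈ U i}, U i) = ⋃ i : I, ⋃ (_ : y ∈ U i), U i from rfl]
    rw [iSup_iUnion]
    congr 1
    funext i
    rw [iSup_iUnion fun _ : y ∈ U i => U i]
    by_cases h : y ∈ U i
    · rw [if_pos h, iSup_pos h]
    · rw [if_neg h, iSup_neg h]
      rfl
  rw [show (fun y : X => ⨆ z ∈ Qset U y, (‖frameKer φ z x‖₊ : ℝ≥0∞)) =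
      fun y : X => ⨆ i : I, if y ∈ U i then
        ⨆ z ∈ U i, (‖frameKer φ z x‖₊ : ℝ≥0∞) else 0 from funext key]
  exact Measurable.iSup fun i => Measurable.ite (hUm i) measurable_const measurable_const

end AuxLemmas
section ReproKernel

lemma repro_kernel {μ : MeasureTheory.Measure X} (φ : X → H)
    (hVmeas : ∀ f : H, Measurable fun x => (inner ℂ (φ x) f : ℂ))
    (hParseval : ∀ f : H,
      ∫⁻ x, (‖(inner ℂ (φ x) f : ℂ)‖₊ : ℝ≥0∞) ^ 2 ∂μ = (‖f‖₊ : ℝ≥0∞) ^ 2)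
    (x w : X) :
    ∫ y, frameKer φ x y * frameKer φ y w ∂μ = frameKer φ x w := by
  have hpow : ∀ a : ℝ≥0∞, a ^ (2 : ℝ) = a ^ (2 : ℕ) := fun a => by
    rw [← ENNReal.rpow_natCast]
    norm_num
  have hsn : ∀ f : H, eLpNorm (fun y => (inner ℂ (φ y) f : ℂ)) 2 μ = (‖f‖₊ : ℝ≥0∞) := by
    intro f
    rw [eLpNorm_eq_lintegral_rpow_enorm_toReal two_ne_zero ENNReal.ofNat_ne_top]
    simp only [ENNReal.toReal_ofNat, enorm_eq_nnnorm]
    have h1 : ∫⁻ y, (‖(inner ℂ (φ y) f : ℂ)‖₊ : ℝ≥0∞) ^ (2 : ℝ) ∂μ = (‖f‖₊ : ℝ≥0∞) ^ (2 : ℕ) := by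
      rw [← hParseval f]
      exact lintegral_congr fun y => hpow _
    rw [h1, ← hpow, ← ENNReal.rpow_mul]
    norm_num
  have hmem : ∀ f : H, MemLp (fun y => (inner ℂ (φ y) f : ℂ)) 2 μ := fun f =>
    ⟨(hVmeas f).aestronglyMeasurable, by rw [hsn f]; exact ENNReal.coe_lt_top⟩
  let L : H →ₗᵢ[ℂ] (MeasureTheory.Lp ℂ 2 μ) :=
    { toFun := fun f => (hmem f).toLp _
      map_add' := fun f g => by
        rw [← MemLp.toLp_add (hmem f) (hmem g)]
        refine MemLp.toLp_congr _ _ (Filter.Eventually.of_forall fun y => ?_)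
        simp [inner_add_right]
      map_smul' := fun a f => by
        simp only [RingHom.id_apply]
        rw [← MemLp.toLp_const_smul a (hmem f)]
        refine MemLp.toLp_congr _ _ (Filter.Eventually.of_forall fun y => ?_)
        simp [inner_smul_right]
      norm_map' := fun f => by
        show ‖MemLp.toLp _ (hmem f)‖ = ‖f‖
        rw [MeasureTheory.Lp.norm_toLp, hsn f]
        simp }
  have key : (inner ℂ (L (φ x)) (L (φ w)) : ℂ) = inner ℂ (φ x) (φ w) := L.inner_map_map _ _
  rw [MeasureTheory.L2.inner_def] at key
  have h1 : (L (φ x) : X → ℂ) =ᵐ[μ] fun y => (inner ℂ (φ y) (φ x) : ℂ) :=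
    MemLp.coeFn_toLp (hmem (φ x))
  have h2 : (L (φ w) : X → ℂ) =ᵐ[μ] fun y => (inner ℂ (φ y) (φ w) : ℂ) :=
    MemLp.coeFn_toLp (hmem (φ w))
  have h3 : ∫ y, frameKer φ x y * frameKer φ y w ∂μ =
      ∫ a, (inner ℂ ((L (φ x)) a) ((L (φ w)) a) : ℂ) ∂μ := by
    refine integral_congr_ae ?_
    filter_upwards [h1, h2] with y hy1 hy2
    rw [hy1, hy2, RCLike.inner_apply]
    rw [frameKer, frameKer, ← inner_conj_symm]
    rw [mul_comm]
  rw [h3, key]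
  rfl

end ReproKernel
section MainAux

variable {I : Type*}

/-- The `i`-th summand of the discretization operator. -/
def Tfun (μ : MeasureTheory.Measure X) (Φ : I → X → ℝ) (F : X → ℂ) (φ : X → H)
    (xi : I → X) (i : I) (x : X) : ℂ :=
  ((∫ y, Φ i y ∂μ : ℝ) : ℂ) * F (xi i) * frameKer φ x (xi i)

/-- The absolute-value majorant of the discretization series. -/
def Sfun (μ : MeasureTheory.Measure X) (Φ : I → X → ℝ) (F : X → ℂ) (φ : X → H)
    (xi : I → X) (x : X) : ℝ≥0∞ :=
  ∑' i, (‖Tfun μ Φ F φ xi i x‖₊ : ℝ≥0∞)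

/-- The discretization operator. -/
def gfun (μ : MeasureTheory.Measure X) (Φ : I → X → ℝ) (F : X → ℂ) (φ : X → H)
    (xi : I → X) (x : X) : ℂ :=
  ∑' i, Tfun μ Φ F φ xi i x

/-- `M* |F|`. -/
def Gfun (μ : MeasureTheory.Measure X) (U : I → Set X) (φ : X → H) (F : X → ℂ)
    (x : X) : ℝ≥0∞ :=
  ∫⁻ y, (⨆ z ∈ Qset U x, (‖frameKer φ z y‖₊ : ℝ≥0∞)) * (‖F y‖₊ : ℝ≥0∞) ∂μ

/-- `M (M* |F|)`. -/
def Wfun (μ : MeasureTheory.Measure X) (U : I → Set X) (φ : X → H) (F : X → ℂ)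
    (x : X) : ℝ≥0∞ :=
  ∫⁻ y, (⨆ z ∈ Qset U y, (‖frameKer φ z x‖₊ : ℝ≥0∞)) * Gfun μ U φ F y ∂μ

end MainAux
set_option maxHeartbeats 1000000 in
/-- If the maximal kernels `M(x,y) = sup_{z∈Q_y}|⟨φ_x,φ_z⟩|` and
`M*(x,y) = M(y,x)` act boundedly on `Y`, then for any partition of unity `(Φᵢ)` subordinate
to the admissible covering `U`, any points `xᵢ ∈ Uᵢ` and any `F ∈ Y` satisfying the
reproducing formula `F = R(F)` pointwise, the discretization
`U_Φ F = Σᵢ cᵢ F(xᵢ) R(·, xᵢ)` (with `cᵢ = ∫ Φᵢ dμ`) converges absolutely a.e., belongs to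
`R(Y)` (i.e. lies in `Y` and satisfies `U_Φ F = R(U_Φ F)` a.e.), and
`‖U_Φ F | Y‖ ≤ σ(U) |||M||| |||M*||| ‖F | Y‖`. -/
theorem discretization_operator_bounded
    [BorelSpace X] [T2Space X] [LocallyCompactSpace X] [SigmaCompactSpace X]
    [IsFiniteMeasureOnCompacts μ]
    [CompleteSpace H] [TopologicalSpace.SeparableSpace H]
    (hsupp : ∀ V : Set X, IsOpen V → V.Nonempty → 0 < μ V)
    (Q : QBF X μ)
    (hrich : ∀ K : Set X, IsCompact K → Q.N (K.indicator fun _ => 1) ≠ ⊤)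
    (φ : X → H)
    -- condition (F):
    (hVmeas : ∀ f : H, Measurable fun x => (inner ℂ (φ x) f : ℂ))
    (hParseval : ∀ f : H,
      ∫⁻ x, (‖(inner ℂ (φ x) f : ℂ)‖₊ : ℝ≥0∞) ^ 2 ∂μ = (‖f‖₊ : ℝ≥0∞) ^ 2)
    (ν : X → ℝ) (hν1 : ∀ x, 1 ≤ ν x) (hνmeas : Measurable ν)
    (CB : ℝ) (hCB : 0 < CB) (hφbd : ∀ x, ‖φ x‖ ≤ CB * ν x)
    (hRAm : AmNormC μ ν (frameKer φ) ≠ ⊤)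
    (hφH1 : ∀ x, H1enorm μ φ ν (φ x) ≠ ⊤)
    -- property `F(ν,Y)`:
    (CR : ℝ≥0∞) (hCR : CR ≠ ⊤) (hRY : KernelBddC μ Q (frameKer φ) CR)
    (C' : ℝ≥0∞) (hC' : C' ≠ ⊤)
    (hRinf : ∀ F : X → ℂ, Measurable F → Q.N (fun x => (‖F x‖₊ : ℝ≥0∞)) ≠ ⊤ →
      ∀ᵐ x ∂μ, (‖Rop μ φ F x‖₊ : ℝ≥0∞) ≤
        C' * ENNReal.ofReal (ν x) * Q.N (fun x => (‖F x‖₊ : ℝ≥0∞)))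
    -- admissible covering:
    {I : Type*} (U : I → Set X) (σ : ℕ) (hU : AdmissibleCovering U σ)
    -- boundedness of the maximal kernels `M` and `M*` on `Y`:
    (CM CMs : ℝ≥0∞) (hCM : CM ≠ ⊤) (hCMs : CMs ≠ ⊤)
    (hM : KernelBddE μ Q
      (fun x y => ⨆ z ∈ Qset U y, (‖frameKer φ z x‖₊ : ℝ≥0∞)) CM)
    (hMs : KernelBddE μ Q
      (fun x y => ⨆ z ∈ Qset U x, (‖frameKer φ z y‖₊ : ℝ≥0∞)) CMs)
    -- partition of unity subordinate to `U` and sampling points: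
    (Φ : I → X → ℝ) (hΦmeas : ∀ i, Measurable (Φ i))
    (hΦ0 : ∀ i x, 0 ≤ Φ i x) (hΦ1 : ∀ i x, Φ i x ≤ 1)
    (hΦsupp : ∀ i x, x ∉ U i → Φ i x = 0)
    (hΦsum : ∀ x, HasSum (fun i => Φ i x) 1)
    (xi : I → X) (hxi : ∀ i, xi i ∈ U i)
    -- `F ∈ Y` satisfying the reproducing formula pointwise:
    (F : X → ℂ) (hFmeas : Measurable F)
    (hFY : Q.N (fun x => (‖F x‖₊ : ℝ≥0∞)) ≠ ⊤)
    (hFrep : ∀ x, F x = Rop μ φ F x) :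
    -- absolute convergence a.e.:
    (∀ᵐ x ∂μ, Summable fun i =>
        ‖((∫ y, Φ i y ∂μ : ℝ) : ℂ) * F (xi i) * frameKer φ x (xi i)‖) ∧
    -- `U_Φ F ∈ Y` with the quasi-norm bound:
    Q.N (fun x =>
        (‖∑' i, ((∫ y, Φ i y ∂μ : ℝ) : ℂ) * F (xi i) * frameKer φ x (xi i)‖₊ : ℝ≥0∞)) ≤
      (σ : ℝ≥0∞) * CM * CMs * Q.N (fun x => (‖F x‖₊ : ℝ≥0∞)) ∧
    -- `U_Φ F` lies in the range of `R`: `U_Φ F = R (U_Φ F)` a.e.: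
    (∀ᵐ x ∂μ,
      (∑' i, ((∫ y, Φ i y ∂μ : ℝ) : ℂ) * F (xi i) * frameKer φ x (xi i)) =
        Rop μ φ
          (fun x' => ∑' i, ((∫ y, Φ i y ∂μ : ℝ) : ℂ) * F (xi i) * frameKer φ x' (xi i))
          x) := by
  classical
  -- countability of the index set
  haveI hcI : Countable I := Set.countable_univ_iff.mp
    (hU.locFin.countable_univ fun i => ((hU.interior_nonempty i).mono interior_subset))
  -- measurability of the various kernels and functions
  have hKp : Measurable fun p : X × X => ⨆ z ∈ Qset U p.1, (‖frameKer φ z p.2‖₊ : ℝ≥0∞) :=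
    qsup_measurable U hU.meas φ hVmeas
  have hVsnd : ∀ a : X, Measurable fun y => frameKer φ a y := by
    intro a
    have he : (fun y => frameKer φ a y) = fun y => (starRingEnd ℂ) (inner ℂ (φ y) (φ a) : ℂ) := by
      funext y
      rw [frameKer, ← inner_conj_symm]
    rw [he]
    exact RCLike.continuous_conj.measurable.comp (hVmeas (φ a))
  have hVfst : ∀ w : X, Measurable fun a => frameKer φ a w := fun w => hVmeas (φ w)
  have hTm : ∀ i, Measurable (Tfun μ Φ F φ xi i) := fun i =>
    (hVfst (xi i)).const_mul _
  have hgm : Measurable (gfun μ Φ F φ xi) := measurable_tsum_complex hTm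
  have hSm : Measurable (Sfun μ Φ F φ xi) :=
    Measurable.ennreal_tsum fun i => (hTm i).nnnorm.coe_nnreal_ennreal
  have hGm : Measurable (Gfun μ U φ F) := by
    have : Measurable fun p : X × X =>
        (⨆ z ∈ Qset U p.1, (‖frameKer φ z p.2‖₊ : ℝ≥0∞)) * (‖F p.2‖₊ : ℝ≥0∞) :=
      hKp.mul (hFmeas.comp measurable_snd).nnnorm.coe_nnreal_ennreal
    exact this.lintegral_prod_right'
  have hWm : Measurable (Wfun μ U φ F) := by
    have : Measurable fun p : X × X =>
        (⨆ z ∈ Qset U p.2, (‖frameKer φ z p.1‖₊ : ℝ≥0∞)) * Gfun μ U φ F p.2 :=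
      (qsup_measurable_swap U hU.meas φ hVmeas).mul (hGm.comp measurable_snd)
    exact this.lintegral_prod_right'
  -- bound for G
  have hGn : Q.N (Gfun μ U φ F) ≤ CMs * Q.N (fun x => (‖F x‖₊ : ℝ≥0∞)) :=
    hMs _ hFmeas.nnnorm.coe_nnreal_ennreal hFY
  have hGt : Q.N (Gfun μ U φ F) ≠ ⊤ :=
    (lt_of_le_of_lt hGn (ENNReal.mul_lt_top hCMs.lt_top hFY.lt_top)).ne
  have hWn : Q.N (Wfun μ U φ F) ≤ CM * Q.N (Gfun μ U φ F) := hM _ hGm hGt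
  -- the integrals of the partition of unity
  have hc : ∀ i, (0 : ℝ) ≤ ∫ y, Φ i y ∂μ := fun i => integral_nonneg (hΦ0 i)
  have hΦint : ∀ i, Integrable (Φ i) μ := by
    intro i
    have hμU : μ (U i) < ⊤ :=
      lt_of_le_of_lt (measure_mono subset_closure) (hU.rel_compact i).measure_lt_top
    have hind : Integrable ((U i).indicator fun _ => (1 : ℝ)) μ :=
      (integrable_indicator_iff (hU.meas i)).mpr ((integrableOn_const_iff (C := (1 : ℝ))).mpr (Or.inr hμU))
    refine hind.mono' (hΦmeas i).aestronglyMeasurable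
      (Filter.Eventually.of_forall fun y => ?_)
    by_cases hy : y ∈ U i
    · rw [Set.indicator_of_mem hy, Real.norm_eq_abs, abs_of_nonneg (hΦ0 i y)]
      exact hΦ1 i y
    · rw [hΦsupp i y hy, Set.indicator_of_notMem hy]
      simp
  have hsum1 : ∀ y, (∑' i, ENNReal.ofReal (Φ i y)) = 1 := by
    intro y
    rw [← ENNReal.ofReal_tsum_of_nonneg (fun i => hΦ0 i y) (hΦsum y).summable,
      (hΦsum y).tsum_eq, ENNReal.ofReal_one]
  -- the main pointwise estimate : S ≤ W
  have hSW : ∀ x, Sfun μ Φ F φ xi x ≤ Wfun μ U φ F x := by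
    intro x
    have hKyx : Measurable fun y => ⨆ z ∈ Qset U y, (‖frameKer φ z x‖₊ : ℝ≥0∞) :=
      qsup_measurable_fix U hU.meas φ x
    have hterm : ∀ i, (‖Tfun μ Φ F φ xi i x‖₊ : ℝ≥0∞) ≤
        ∫⁻ y, ENNReal.ofReal (Φ i y) *
          ((⨆ z ∈ Qset U y, (‖frameKer φ z x‖₊ : ℝ≥0∞)) * Gfun μ U φ F y) ∂μ := by
      intro i
      have hceq : (‖Tfun μ Φ F φ xi i x‖₊ : ℝ≥0∞) =
          ∫⁻ y, ENNReal.ofReal (Φ i y) *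
            ((‖F (xi i)‖₊ : ℝ≥0∞) * (‖frameKer φ x (xi i)‖₊ : ℝ≥0∞)) ∂μ := by
        rw [lintegral_mul_const _ (hΦmeas i).ennreal_ofReal,
          ← ofReal_integral_eq_lintegral_ofReal (hΦint i)
            (Filter.Eventually.of_forall (hΦ0 i))]
        show (‖((∫ y, Φ i y ∂μ : ℝ) : ℂ) * F (xi i) * frameKer φ x (xi i)‖₊ : ℝ≥0∞) = _
        rw [nnnorm_mul, nnnorm_mul, ENNReal.coe_mul, ENNReal.coe_mul, mul_assoc]
        congr 1
        rw [Complex.nnnorm_real, ← enorm_eq_nnnorm, Real.enorm_eq_ofReal (hc i)]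
      rw [hceq]
      refine lintegral_mono fun y => ?_
      by_cases hy : y ∈ U i
      · refine mul_le_mul_right ?_ _
        have hmem : xi i ∈ Qset U y :=
          Set.mem_biUnion (show i ∈ {j : I | y ∈ U j} from hy) (hxi i)
        have h1 : (‖F (xi i)‖₊ : ℝ≥0∞) ≤ Gfun μ U φ F y := by
          rw [hFrep (xi i)]
          refine le_trans (enorm_integral_le_lintegral_enorm _) ?_
          refine lintegral_mono fun t => ?_
          rw [enorm_eq_nnnorm, nnnorm_mul, ENNReal.coe_mul]
          exact mul_le_mul_left
            (le_biSup (fun z : X => (‖frameKer φ z t‖₊ : ℝ≥0∞)) hmem) _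
        have h2 : (‖frameKer φ x (xi i)‖₊ : ℝ≥0∞) ≤
            ⨆ z ∈ Qset U y, (‖frameKer φ z x‖₊ : ℝ≥0∞) := by
          have hcs : ‖frameKer φ x (xi i)‖₊ = ‖frameKer φ (xi i) x‖₊ := by
            rw [show frameKer φ x (xi i) = (starRingEnd ℂ) (frameKer φ (xi i) x) from
              (inner_conj_symm _ _).symm, RCLike.nnnorm_conj]
          rw [hcs]
          exact le_biSup (fun z : X => (‖frameKer φ z x‖₊ : ℝ≥0∞)) hmem
        calc (‖F (xi i)‖₊ : ℝ≥0∞) * (‖frameKer φ x (xi i)‖₊ : ℝ≥0∞) ≤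
            Gfun μ U φ F y * ⨆ z ∈ Qset U y, (‖frameKer φ z x‖₊ : ℝ≥0∞) :=
              mul_le_mul' h1 h2
          _ = (⨆ z ∈ Qset U y, (‖frameKer φ z x‖₊ : ℝ≥0∞)) * Gfun μ U φ F y := mul_comm _ _
      · rw [hΦsupp i y hy]
        simp
    calc Sfun μ Φ F φ xi x ≤ ∑' i, ∫⁻ y, ENNReal.ofReal (Φ i y) *
          ((⨆ z ∈ Qset U y, (‖frameKer φ z x‖₊ : ℝ≥0∞)) * Gfun μ U φ F y) ∂μ :=
        ENNReal.tsum_le_tsum hterm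
      _ = ∫⁻ y, ∑' i, ENNReal.ofReal (Φ i y) *
          ((⨆ z ∈ Qset U y, (‖frameKer φ z x‖₊ : ℝ≥0∞)) * Gfun μ U φ F y) ∂μ :=
        (lintegral_tsum fun i =>
          ((hΦmeas i).ennreal_ofReal.mul (hKyx.mul hGm)).aemeasurable).symm
      _ = Wfun μ U φ F x := by
        refine lintegral_congr fun y => ?_
        rw [ENNReal.tsum_mul_right, hsum1 y, one_mul]
  -- the quasi-norm bound for S
  have hSN : Q.N (Sfun μ Φ F φ xi) ≤ CM * CMs * Q.N (fun x => (‖F x‖₊ : ℝ≥0∞)) := by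
    have m2 : Q.N (Sfun μ Φ F φ xi) ≤ Q.N (Wfun μ U φ F) :=
      Q.mono _ _ hSm hWm (Filter.Eventually.of_forall hSW)
    calc Q.N (Sfun μ Φ F φ xi) ≤ CM * Q.N (Gfun μ U φ F) := m2.trans hWn
      _ ≤ CM * (CMs * Q.N (fun x => (‖F x‖₊ : ℝ≥0∞))) := mul_le_mul_right hGn _
      _ = CM * CMs * Q.N (fun x => (‖F x‖₊ : ℝ≥0∞)) := (mul_assoc _ _ _).symm
  have hSt : Q.N (Sfun μ Φ F φ xi) ≠ ⊤ :=
    (lt_of_le_of_lt hSN (ENNReal.mul_lt_top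
      (ENNReal.mul_lt_top hCM.lt_top hCMs.lt_top) hFY.lt_top)).ne
  have haeS : ∀ᵐ x ∂μ, Sfun μ Φ F φ xi x ≠ ⊤ := Q.ae_ne_top hSm hSt
  -- the three claims
  refine ⟨?_, ?_, ?_⟩
  · -- absolute convergence almost everywhere
    filter_upwards [haeS] with x hx
    have hx' : Summable fun i => ‖Tfun μ Φ F φ xi i x‖₊ :=
      ENNReal.tsum_coe_ne_top_iff_summable.mp hx
    have := NNReal.summable_coe.mpr hx'
    simpa only [coe_nnnorm, Tfun] using this
  · -- the quasi-norm bound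
    have hgN : Q.N (fun x => (‖gfun μ Φ F φ xi x‖₊ : ℝ≥0∞)) ≤
        CM * CMs * Q.N (fun x => (‖F x‖₊ : ℝ≥0∞)) := by
      refine le_trans (Q.mono _ _ hgm.nnnorm.coe_nnreal_ennreal hSm
        (Filter.Eventually.of_forall fun x => ennnorm_tsum_le_general _)) hSN
    show Q.N (fun x => (‖gfun μ Φ F φ xi x‖₊ : ℝ≥0∞)) ≤ _
    cases isEmpty_or_nonempty I with
    | inl hI =>
      have hzero : (fun x => (‖gfun μ Φ F φ xi x‖₊ : ℝ≥0∞)) = fun _ => 0 := by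
        funext x
        rw [show gfun μ Φ F φ xi x = 0 from tsum_empty]
        simp
      rw [hzero, Q.N_zero]
      exact zero_le
    | inr hI =>
      have hone : (1 : ℝ≥0∞) ≤ (σ : ℝ≥0∞) := by
        have i : I := Classical.arbitrary I
        have hne : ({j | (U i ∩ U j).Nonempty}).Nonempty := by
          refine ⟨i, ?_⟩
          rw [Set.mem_setOf_eq, Set.inter_self]
          exact (hU.interior_nonempty i).mono interior_subset
        have h1 : 1 ≤ ({j | (U i ∩ U j).Nonempty}).ncard :=
          (Set.ncard_pos (hU.inter_finite i)).mpr hne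
        exact_mod_cast h1.trans (hU.inter_card_le i)
      calc Q.N (fun x => (‖gfun μ Φ F φ xi x‖₊ : ℝ≥0∞)) ≤
          CM * CMs * Q.N (fun x => (‖F x‖₊ : ℝ≥0∞)) := hgN
        _ ≤ (σ : ℝ≥0∞) * CM * CMs * Q.N (fun x => (‖F x‖₊ : ℝ≥0∞)) := by
          rw [show (σ : ℝ≥0∞) * CM * CMs * Q.N (fun x => (‖F x‖₊ : ℝ≥0∞)) =
            (σ : ℝ≥0∞) * (CM * CMs * Q.N (fun x => (‖F x‖₊ : ℝ≥0∞))) by ring]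
          exact le_mul_of_one_le_left zero_le hone
  · -- the reproducing formula for the discretization
    have hker : ∀ a w : X, ∫ y, frameKer φ a y * frameKer φ y w ∂μ = frameKer φ a w :=
      repro_kernel φ hVmeas hParseval
    have hhmeas : Measurable fun y => (((Sfun μ Φ F φ xi y).toReal : ℝ) : ℂ) :=
      Complex.measurable_ofReal.comp hSm.ennreal_toReal
    have hhle : ∀ y, (‖(((Sfun μ Φ F φ xi y).toReal : ℝ) : ℂ)‖₊ : ℝ≥0∞) ≤
        Sfun μ Φ F φ xi y := by
      intro y
      rw [Complex.nnnorm_real, ← enorm_eq_nnnorm, Real.enorm_eq_ofReal ENNReal.toReal_nonneg]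
      exact ENNReal.ofReal_toReal_le
    have hhN : Q.N (fun y => (‖(((Sfun μ Φ F φ xi y).toReal : ℝ) : ℂ)‖₊ : ℝ≥0∞)) ≠ ⊤ :=
      (lt_of_le_of_lt (Q.mono _ _ hhmeas.nnnorm.coe_nnreal_ennreal hSm
        (Filter.Eventually.of_forall hhle)) hSt.lt_top).ne
    obtain ⟨hint, -⟩ := hRY _ hhmeas hhN
    have heq : ∀ᵐ y ∂μ, (‖(((Sfun μ Φ F φ xi y).toReal : ℝ) : ℂ)‖₊ : ℝ≥0∞) =
        Sfun μ Φ F φ xi y := by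
      filter_upwards [haeS] with y hy
      rw [Complex.nnnorm_real, ← enorm_eq_nnnorm, Real.enorm_eq_ofReal ENNReal.toReal_nonneg,
        ENNReal.ofReal_toReal hy]
    have hfin : ∀ᵐ x ∂μ,
        (∫⁻ y, (‖frameKer φ x y‖₊ : ℝ≥0∞) * Sfun μ Φ F φ xi y ∂μ) ≠ ⊤ := by
      filter_upwards [hint] with x hx
      have h1 : (∫⁻ y, (‖frameKer φ x y *
          (((Sfun μ Φ F φ xi y).toReal : ℝ) : ℂ)‖₊ : ℝ≥0∞) ∂μ) < ⊤ := hx.hasFiniteIntegral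
      have h2 : (∫⁻ y, (‖frameKer φ x y‖₊ : ℝ≥0∞) * Sfun μ Φ F φ xi y ∂μ) =
          ∫⁻ y, (‖frameKer φ x y *
            (((Sfun μ Φ F φ xi y).toReal : ℝ) : ℂ)‖₊ : ℝ≥0∞) ∂μ := by
        refine lintegral_congr_ae ?_
        filter_upwards [heq] with y hy
        rw [nnnorm_mul, ENNReal.coe_mul, hy]
      rw [h2]
      exact h1.ne
    filter_upwards [hfin] with x hx
    show gfun μ Φ F φ xi x = Rop μ φ (gfun μ Φ F φ xi) x
    have habs : ∀ i, AEStronglyMeasurable (fun y => frameKer φ x y * Tfun μ Φ F φ xi i y) μ :=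
      fun i => ((hVsnd x).mul (hTm i)).aestronglyMeasurable
    have hsum_fin : (∑' i, ∫⁻ y, (‖frameKer φ x y * Tfun μ Φ F φ xi i y‖₊ : ℝ≥0∞) ∂μ) ≠ ⊤ := by
      rw [← lintegral_tsum (f := fun i y => (‖frameKer φ x y * Tfun μ Φ F φ xi i y‖₊ : ℝ≥0∞))
        fun i => ((hVsnd x).mul (hTm i)).nnnorm.coe_nnreal_ennreal.aemeasurable]
      have he : ∀ y, (∑' i, (‖frameKer φ x y * Tfun μ Φ F φ xi i y‖₊ : ℝ≥0∞)) =
          (‖frameKer φ x y‖₊ : ℝ≥0∞) * Sfun μ Φ F φ xi y := by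
        intro y
        rw [show (fun i => ((‖frameKer φ x y * Tfun μ Φ F φ xi i y‖₊ : ℝ≥0∞))) =
          fun i => (‖frameKer φ x y‖₊ : ℝ≥0∞) * (‖Tfun μ Φ F φ xi i y‖₊ : ℝ≥0∞) from
          funext fun i => by rw [nnnorm_mul, ENNReal.coe_mul]]
        exact ENNReal.tsum_mul_left
      rw [lintegral_congr he]
      exact hx
    have e1 : Rop μ φ (gfun μ Φ F φ xi) x =
        ∫ y, ∑' i, frameKer φ x y * Tfun μ Φ F φ xi i y ∂μ := by
      refine integral_congr_ae (Filter.Eventually.of_forall fun y => ?_)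
      show frameKer φ x y * (∑' i, Tfun μ Φ F φ xi i y) = _
      exact tsum_mul_left.symm
    have e2 : ∀ i, ∫ y, frameKer φ x y * Tfun μ Φ F φ xi i y ∂μ = Tfun μ Φ F φ xi i x := by
      intro i
      have hre : (fun y => frameKer φ x y * Tfun μ Φ F φ xi i y) =
          fun y => (((∫ t, Φ i t ∂μ : ℝ) : ℂ) * F (xi i)) *
            (frameKer φ x y * frameKer φ y (xi i)) := by
        funext y
        show frameKer φ x y * (((∫ t, Φ i t ∂μ : ℝ) : ℂ) * F (xi i) * frameKer φ y (xi i)) = _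
        ring
      rw [hre, integral_const_mul, hker x (xi i)]
      show (((∫ t, Φ i t ∂μ : ℝ) : ℂ) * F (xi i)) * frameKer φ x (xi i) = _
      rw [Tfun]
    rw [e1, integral_tsum habs hsum_fin]
    exact (tsum_congr e2).symm
end
end
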